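/- Let A⁺ be the Moore–Penrose inverse formula (I − J/(n+1)) G₂ (I − J/(n+1)) + (x − 𝟏/2)(x − 𝟏/2)ᵀ with J = 𝟏𝟏ᵀ. Under the standing assumptions, A⁺A = I − 𝟏𝟏ᵀ/(n+1), the orthogonal projection onto the orthogonal complement of span(𝟏). -/

import Mathlib

open Matrix

noncomputable section

def onesVec (n : ℕ) : Fin (n+1) → ℝ := fun _ => 1

def gridVec (n : ℕ) : Fin (n+1) → ℝ := fun i => (i : ℝ) / n

def eL (n : ℕ) : Fin (n+1) → ℝ := fun i => if i.1 = 0 then 1 else 0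

def eR (n : ℕ) : Fin (n+1) → ℝ := fun i => if i.1 = n then 1 else 0

def interiorEmb (n : ℕ) : Fin (n-1) → Fin (n+1) :=
  fun i => ⟨i.1 + 1, by have := i.isLt; omega⟩

def centralBlock (n : ℕ) (A : Matrix (Fin (n+1)) (Fin (n+1)) ℝ) :
    Matrix (Fin (n-1)) (Fin (n-1)) ℝ :=
  A.submatrix (interiorEmb n) (interiorEmb n)

def pad (n : ℕ) (B : Matrix (Fin (n-1)) (Fin (n-1)) ℝ) :
    Matrix (Fin (n+1)) (Fin (n+1)) ℝ :=
  fun i j =>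
    if hi : 0 < i.1 ∧ i.1 < n then
      if hj : 0 < j.1 ∧ j.1 < n then
        B ⟨i.1 - 1, by omega⟩ ⟨j.1 - 1, by omega⟩
      else 0
    else 0

def G2 (n : ℕ) (A : Matrix (Fin (n+1)) (Fin (n+1)) ℝ) :
    Matrix (Fin (n+1)) (Fin (n+1)) ℝ :=
  pad n (centralBlock n A)⁻¹

def Aplus (n : ℕ) (A : Matrix (Fin (n+1)) (Fin (n+1)) ℝ) :
    Matrix (Fin (n+1)) (Fin (n+1)) ℝ :=
  (1 - ((n : ℝ) + 1)⁻¹ • vecMulVec (onesVec n) (onesVec n)) * G2 n A *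
      (1 - ((n : ℝ) + 1)⁻¹ • vecMulVec (onesVec n) (onesVec n)) +
    vecMulVec (gridVec n - (1/2 : ℝ) • onesVec n)
      (gridVec n - (1/2 : ℝ) • onesVec n)


open Finset

-- sum split lemma
lemma sum_split {n : ℕ} (hn : 2 ≤ n) (f : Fin (n+1) → ℝ) :
    ∑ j, f j = f ⟨0, by omega⟩ + (∑ k : Fin (n-1), f (interiorEmb n k)) + f ⟨n, by omega⟩ := by
  set g : ℕ → ℝ := fun i => if h : i < n+1 then f ⟨i, h⟩ else 0 with hg
  have h0 : ∑ j : Fin (n+1), f j = ∑ i ∈ range (n+1), g i := by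
    rw [← Fin.sum_univ_eq_sum_range]
    exact Finset.sum_congr rfl fun j _ => by simp [hg, j.isLt]; intro h; have := j.isLt; omega
  rw [h0, Finset.sum_range_succ]
  have h1 : ∑ i ∈ range n, g i = g 0 + ∑ k : Fin (n-1), f (interiorEmb n k) := by
    conv_lhs => rw [show n = (n-1)+1 by omega]
    rw [Finset.sum_range_succ', add_comm]
    congr 1
    rw [← Fin.sum_univ_eq_sum_range (fun i => g (i+1)) (n-1)]
    exact Finset.sum_congr rfl fun k _ => by
      simp only [hg, interiorEmb]
      rw [dif_pos (by have := k.isLt; omega)]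
  rw [h1]
  have e0 : g 0 = f ⟨0, by omega⟩ := by simp [hg]
  have en : g n = f ⟨n, by omega⟩ := by simp [hg]
  rw [e0, en]

lemma gauss {n : ℕ} (hn : 2 ≤ n) :
    ∑ k : Fin (n-1), ((k.1 : ℝ) + 1) = (n : ℝ) * ((n : ℝ) - 1) / 2 := by
  have hnat : (∑ i ∈ range (n-1), (i+1)) * 2 = n * (n-1) := by
    have h1 : ∑ i ∈ range n, i = ∑ i ∈ range (n-1), (i+1) := by
      conv_lhs => rw [show n = (n-1)+1 by omega]
      rw [Finset.sum_range_succ']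
      simp
    rw [← h1, Finset.sum_range_id_mul_two]
  have := congrArg (Nat.cast : ℕ → ℝ) hnat
  push_cast at this
  rw [Fin.sum_univ_eq_sum_range (fun i => ((i:ℝ)+1)) (n-1)]
  have hn1 : ((n-1 : ℕ) : ℝ) = (n:ℝ) - 1 := by push_cast [Nat.cast_sub (by omega : 1 ≤ n)]; ring
  rw [hn1] at this
  linarith [this]

lemma vecMulVec_mul' {n : ℕ} (u v : Fin (n+1) → ℝ) (A : Matrix (Fin (n+1)) (Fin (n+1)) ℝ) :
    vecMulVec u v * A = vecMulVec u (v ᵥ* A) := by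
  ext i j
  simp [mul_apply, vecMulVec_apply, vecMul, dotProduct, Finset.mul_sum, mul_assoc]


def Qmat (n : ℕ) : Matrix (Fin (n+1)) (Fin (n+1)) ℝ :=
  fun i j =>
    if 0 < i.1 ∧ i.1 < n then
      (if i = j then 1 else 0) + (gridVec n i - 1) * (if j.1 = 0 then 1 else 0)
        - gridVec n i * (if j.1 = n then 1 else 0)
    else 0


section Key

variable {n : ℕ} (A : Matrix (Fin (n+1)) (Fin (n+1)) ℝ)

lemma inv_cancel_vec (hinv : IsUnit (centralBlock n A).det) (v : Fin (n-1) → ℝ)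
    (i' : Fin (n-1)) :
    ∑ k, (centralBlock n A)⁻¹ i' k * (∑ m, centralBlock n A k m * v m) = v i' := by
  have h : (centralBlock n A)⁻¹ *ᵥ (centralBlock n A *ᵥ v) = v := by
    rw [mulVec_mulVec, nonsing_inv_mul _ hinv, one_mulVec]
  simpa [mulVec, dotProduct] using congrFun h i'

lemma G2_mul_A (hn : 2 ≤ n)
    (h1 : A *ᵥ onesVec n = 0)
    (hx : A *ᵥ gridVec n = eR n - eL n)
    (hinv : IsUnit (centralBlock n A).det) :
    G2 n A * A = Qmat n := by
  have hn0 : (n : ℝ) ≠ 0 := by positivity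
  -- boundary column values on interior rows
  have hrown : ∀ r : Fin (n-1), A (interiorEmb n r) ⟨n, by omega⟩ =
      -(∑ m, centralBlock n A r m * (((m.1 : ℝ) + 1) / n)) := by
    intro r
    have hr := congrFun hx (interiorEmb n r)
    rw [mulVec, dotProduct] at hr
    rw [sum_split hn (fun m => A (interiorEmb n r) m * gridVec n m)] at hr
    have hrhs : (eR n - eL n) (interiorEmb n r) = 0 := by
      have h1' : (interiorEmb n r).1 ≠ 0 := Nat.succ_ne_zero _
      have h2' : (interiorEmb n r).1 ≠ n := by
        show r.1 + 1 ≠ n; have := r.isLt; omega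
      simp [eR, eL, h1', h2']
    rw [hrhs] at hr
    have hg0 : gridVec n (⟨0, by omega⟩ : Fin (n+1)) = 0 := by simp [gridVec]
    have hgn : gridVec n (⟨n, by omega⟩ : Fin (n+1)) = 1 := by
      simp only [gridVec]; field_simp
    rw [hg0, hgn, mul_zero, mul_one, zero_add] at hr
    have hmid : ∑ k : Fin (n-1), A (interiorEmb n r) (interiorEmb n k) * gridVec n (interiorEmb n k)
        = ∑ m, centralBlock n A r m * (((m.1 : ℝ) + 1) / n) := by
      refine Finset.sum_congr rfl fun m _ => ?_
      simp [centralBlock, submatrix_apply, gridVec, interiorEmb]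
    rw [hmid] at hr
    linarith
  have hrow0 : ∀ r : Fin (n-1), A (interiorEmb n r) ⟨0, by omega⟩ =
      -(∑ m, centralBlock n A r m) + (∑ m, centralBlock n A r m * (((m.1 : ℝ) + 1) / n)) := by
    intro r
    have hr := congrFun h1 (interiorEmb n r)
    rw [mulVec, dotProduct] at hr
    rw [sum_split hn (fun m => A (interiorEmb n r) m * onesVec n m)] at hr
    simp only [onesVec, mul_one, Pi.zero_apply] at hr
    have hmid : ∑ k : Fin (n-1), A (interiorEmb n r) (interiorEmb n k)
        = ∑ m, centralBlock n A r m := by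
      refine Finset.sum_congr rfl fun m _ => ?_
      simp [centralBlock, submatrix_apply]
    rw [hmid, hrown r] at hr
    linarith
  ext i j
  rw [mul_apply]
  by_cases hi : 0 < i.1 ∧ i.1 < n
  · -- interior row
    have hi1 : i.1 - 1 < n - 1 := by omega
    have hred : ∀ j' : Fin (n+1), ∑ k, G2 n A i k * A k j' =
        ∑ k : Fin (n-1), (centralBlock n A)⁻¹ ⟨i.1 - 1, hi1⟩ k * A (interiorEmb n k) j' := by
      intro j'
      rw [sum_split hn (fun k => G2 n A i k * A k j')]
      have e0 : G2 n A i ⟨0, by omega⟩ = 0 := by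
        simp only [G2, pad]
        rw [dif_pos hi, dif_neg (by simp)]
      have en : G2 n A i ⟨n, by omega⟩ = 0 := by
        simp only [G2, pad]
        rw [dif_pos hi, dif_neg (by simp)]
      rw [e0, en, zero_mul, zero_mul, zero_add, add_zero]
      refine Finset.sum_congr rfl fun k _ => ?_
      have hk2 : 0 < k.1 + 1 ∧ k.1 + 1 < n := ⟨Nat.succ_pos _, by have := k.isLt; omega⟩
      have hpad : G2 n A i (interiorEmb n k) = (centralBlock n A)⁻¹ ⟨i.1 - 1, hi1⟩ k := by
        simp only [G2, pad, interiorEmb]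
        rw [dif_pos hi]
        exact (dif_pos hk2).trans (by simp)
      rw [hpad]
    rw [hred j]
    by_cases hj : 0 < j.1 ∧ j.1 < n
    · -- interior column
      have hj1 : j.1 - 1 < n - 1 := by omega
      have hje : interiorEmb n ⟨j.1 - 1, hj1⟩ = j := by
        apply Fin.ext
        show j.1 - 1 + 1 = j.1
        omega
      have ha : ∀ k : Fin (n-1), A (interiorEmb n k) j
          = centralBlock n A k ⟨j.1 - 1, hj1⟩ := by
        intro k
        simp only [centralBlock, submatrix_apply, hje]
      simp_rw [ha]
      have hmm : ∑ k, (centralBlock n A)⁻¹ ⟨i.1-1, hi1⟩ k * centralBlock n A k ⟨j.1-1, hj1⟩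
          = ((centralBlock n A)⁻¹ * centralBlock n A) ⟨i.1-1, hi1⟩ ⟨j.1-1, hj1⟩ :=
        (mul_apply).symm
      rw [hmm, nonsing_inv_mul _ hinv, one_apply]
      have hiff : ((⟨i.1-1, hi1⟩ : Fin (n-1)) = ⟨j.1-1, hj1⟩) ↔ (i = j) := by
        rw [Fin.ext_iff, Fin.ext_iff]
        show i.1 - 1 = j.1 - 1 ↔ i.1 = j.1
        omega
      have hQ : Qmat n i j = if i = j then 1 else 0 := by
        simp only [Qmat]
        rw [if_pos hi, if_neg (by omega : ¬ j.1 = 0), if_neg (by omega : ¬ j.1 = n)]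
        ring
      rw [hQ]
      simp only [hiff]
    · -- boundary column
      have hj' : j = ⟨0, by omega⟩ ∨ j = ⟨n, by omega⟩ := by
        have hlt := j.isLt
        by_cases h0 : j.1 = 0
        · left; exact Fin.ext h0
        · right
          have hn' : j.1 = n := by
            by_contra hc
            exact hj ⟨by omega, by omega⟩
          exact Fin.ext hn'
      have hc1 : ∑ k, (centralBlock n A)⁻¹ ⟨i.1-1, hi1⟩ k * (∑ m, centralBlock n A k m) = 1 := by
        have := inv_cancel_vec A hinv (fun _ => (1:ℝ)) ⟨i.1-1, hi1⟩
        simpa using this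
      have hcx : ∑ k, (centralBlock n A)⁻¹ ⟨i.1-1, hi1⟩ k
            * (∑ m, centralBlock n A k m * (((m.1 : ℝ) + 1) / n)) =
          (((i.1 - 1 : ℕ) : ℝ) + 1) / n := inv_cancel_vec A hinv _ ⟨i.1-1, hi1⟩
      have hix : (((i.1 - 1 : ℕ) : ℝ) + 1) / n = gridVec n i := by
        have h' : (i.1 - 1 : ℕ) + 1 = i.1 := by omega
        simp only [gridVec]
        rw [show ((i.1 : ℕ) : ℝ) = (((i.1 - 1 : ℕ) + 1 : ℕ) : ℝ) by rw [h']]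
        push_cast
        ring
      rw [hix] at hcx
      rcases hj' with rfl | rfl
      · simp_rw [hrow0]
        have hsplit : ∀ k : Fin (n-1), (centralBlock n A)⁻¹ ⟨i.1-1, hi1⟩ k *
              (-(∑ m, centralBlock n A k m) + (∑ m, centralBlock n A k m * (((m.1 : ℝ) + 1) / n)))
            = -((centralBlock n A)⁻¹ ⟨i.1-1, hi1⟩ k * (∑ m, centralBlock n A k m))
              + (centralBlock n A)⁻¹ ⟨i.1-1, hi1⟩ k
                * (∑ m, centralBlock n A k m * (((m.1 : ℝ) + 1) / n)) := fun k => by ring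
        simp_rw [hsplit]
        rw [Finset.sum_add_distrib, Finset.sum_neg_distrib, hc1, hcx]
        have hij : ¬ i = (⟨0, by omega⟩ : Fin (n+1)) := by
          intro h; rw [h] at hi; exact Nat.lt_irrefl 0 hi.1
        have hQ : Qmat n i ⟨0, by omega⟩ = gridVec n i - 1 := by
          simp only [Qmat]
          rw [if_pos hi, if_neg hij]
          norm_num [show ¬((0:ℕ) = n) by omega]
        rw [hQ]; ring
      · simp_rw [hrown, mul_neg]
        rw [Finset.sum_neg_distrib, hcx]
        have hij : ¬ i = (⟨n, by omega⟩ : Fin (n+1)) := by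
          intro h; rw [h] at hi; exact Nat.lt_irrefl n hi.2
        have hQ : Qmat n i ⟨n, by omega⟩ = -gridVec n i := by
          simp only [Qmat]
          rw [if_pos hi, if_neg hij]
          norm_num [show ¬(n = 0) by omega]
        rw [hQ]
  · -- boundary row: G2 row is zero
    have hz : ∀ k, G2 n A i k * A k j = 0 := by
      intro k
      simp only [G2, pad]
      rw [dif_neg hi, zero_mul]
    simp_rw [hz]
    simp only [Qmat, if_neg hi, Finset.sum_const_zero]

end Key

section Final

variable {n : ℕ}

lemma boundary_cases (j : Fin (n+1)) (hj : ¬ (0 < j.1 ∧ j.1 < n)) :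
    j = ⟨0, by omega⟩ ∨ j = ⟨n, by omega⟩ := by
  have hlt := j.isLt
  by_cases h0 : j.1 = 0
  · left; exact Fin.ext h0
  · right
    have hn' : j.1 = n := by
      by_contra hc
      exact hj ⟨by omega, by omega⟩
    exact Fin.ext hn'

lemma Qmat_colsum (hn : 2 ≤ n) (j : Fin (n+1)) :
    ∑ k, Qmat n k j = if 0 < j.1 ∧ j.1 < n then 1 else -(((n:ℝ) - 1)/2) := by
  have hn0 : (n:ℝ) ≠ 0 := by positivity
  rw [sum_split hn (fun k => Qmat n k j)]
  have e0 : Qmat n ⟨0, by omega⟩ j = 0 := by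
    simp only [Qmat]; rw [if_neg]; exact fun h => Nat.lt_irrefl 0 h.1
  have en : Qmat n ⟨n, by omega⟩ j = 0 := by
    simp only [Qmat]; rw [if_neg]; exact fun h => Nat.lt_irrefl n h.2
  rw [e0, en, zero_add, add_zero]
  have hmid : ∀ k : Fin (n-1), Qmat n (interiorEmb n k) j =
      (if interiorEmb n k = j then 1 else 0)
        + (((k.1:ℝ)+1)/n - 1) * (if j.1 = 0 then 1 else 0)
        - ((k.1:ℝ)+1)/n * (if j.1 = n then 1 else 0) := by
    intro k
    have hk : 0 < (interiorEmb n k).1 ∧ (interiorEmb n k).1 < n :=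
      ⟨Nat.succ_pos _, by show k.1+1 < n; have := k.isLt; omega⟩
    have hgk : gridVec n (interiorEmb n k) = ((k.1:ℝ)+1)/n := by
      simp [gridVec, interiorEmb]
    simp only [Qmat]
    rw [if_pos hk, hgk]
  rw [Finset.sum_congr rfl (fun k _ => hmid k)]
  have hsx : ∑ k : Fin (n-1), ((k.1:ℝ)+1)/n = ((n:ℝ)-1)/2 := by
    rw [← Finset.sum_div, gauss hn]
    field_simp
  have hcard : ((Fintype.card (Fin (n-1)) : ℕ) : ℝ) = (n:ℝ) - 1 := by
    rw [Fintype.card_fin]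
    push_cast [Nat.cast_sub (by omega : 1 ≤ n)]
    ring
  by_cases hj : 0 < j.1 ∧ j.1 < n
  · have hj0 : ¬ j.1 = 0 := by omega
    have hjn : ¬ j.1 = n := by omega
    rw [if_pos hj]
    have hj1 : j.1 - 1 < n - 1 := by omega
    have key : ∀ k : Fin (n-1),
        ((if interiorEmb n k = j then (1:ℝ) else 0)
          + (((k.1:ℝ)+1)/n - 1) * (if j.1 = 0 then 1 else 0)
          - ((k.1:ℝ)+1)/n * (if j.1 = n then 1 else 0))
        = if (⟨j.1-1, hj1⟩ : Fin (n-1)) = k then 1 else 0 := by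
      intro k
      rw [if_neg hj0, if_neg hjn]
      have : (interiorEmb n k = j) = ((⟨j.1-1, hj1⟩ : Fin (n-1)) = k) := by
        apply propext
        rw [Fin.ext_iff, Fin.ext_iff]
        show k.1 + 1 = j.1 ↔ j.1 - 1 = k.1
        omega
      simp only [this]
      ring
    rw [Finset.sum_congr rfl (fun k _ => key k), Finset.sum_ite_eq]
    simp
  · rw [if_neg hj]
    have hne : ∀ k : Fin (n-1), ¬ interiorEmb n k = j := by
      intro k h
      have hkv : k.1 + 1 = j.1 := by
        rw [Fin.ext_iff] at h; exact h
      have := k.isLt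
      exact hj ⟨by omega, by omega⟩
    rcases boundary_cases j hj with rfl | rfl
    · have hn' : ¬ (0:ℕ) = n := by omega
      have key : ∀ k : Fin (n-1),
          ((if interiorEmb n k = (⟨0, by omega⟩ : Fin (n+1)) then (1:ℝ) else 0)
            + (((k.1:ℝ)+1)/n - 1) * (if (0:ℕ) = 0 then 1 else 0)
            - ((k.1:ℝ)+1)/n * (if (0:ℕ) = n then 1 else 0))
          = ((k.1:ℝ)+1)/n - 1 := by
        intro k
        rw [if_neg (hne k), if_pos rfl, if_neg hn']
        ring
      rw [Finset.sum_congr rfl (fun k _ => key k), Finset.sum_sub_distrib, hsx,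
        Finset.sum_const, Finset.card_univ, nsmul_eq_mul, hcard]
      ring
    · have hn' : ¬ n = 0 := by omega
      have key : ∀ k : Fin (n-1),
          ((if interiorEmb n k = (⟨n, by omega⟩ : Fin (n+1)) then (1:ℝ) else 0)
            + (((k.1:ℝ)+1)/n - 1) * (if n = 0 then 1 else 0)
            - ((k.1:ℝ)+1)/n * (if n = n then 1 else 0))
          = -(((k.1:ℝ)+1)/n) := by
        intro k
        rw [if_neg (hne k), if_neg hn', if_pos rfl]
        ring
      rw [Finset.sum_congr rfl (fun k _ => key k), Finset.sum_neg_distrib, hsx]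

end Final

lemma proj_mul_Q {n : ℕ} (hn : 2 ≤ n) :
    (1 - ((n:ℝ)+1)⁻¹ • vecMulVec (onesVec n) (onesVec n)) * Qmat n
      + vecMulVec (gridVec n - (1/2:ℝ) • onesVec n) (eR n - eL n)
      = 1 - ((n:ℝ)+1)⁻¹ • vecMulVec (onesVec n) (onesVec n) := by
  have hn0 : (n:ℝ) ≠ 0 := by positivity
  have hn1 : (n:ℝ) + 1 ≠ 0 := by positivity
  ext i j
  have hP : ∀ a b : Fin (n+1), (1 - ((n:ℝ)+1)⁻¹ • vecMulVec (onesVec n) (onesVec n)) a b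
      = (if a = b then 1 else 0) - ((n:ℝ)+1)⁻¹ := by
    intro a b
    simp [Matrix.sub_apply, one_apply, vecMulVec_apply, onesVec]
  rw [Matrix.add_apply, mul_apply, hP i j]
  have hsum : ∑ k, (1 - ((n:ℝ)+1)⁻¹ • vecMulVec (onesVec n) (onesVec n)) i k * Qmat n k j
      = Qmat n i j - ((n:ℝ)+1)⁻¹ * ∑ k, Qmat n k j := by
    have hterm : ∀ k, (1 - ((n:ℝ)+1)⁻¹ • vecMulVec (onesVec n) (onesVec n)) i k * Qmat n k j
        = (if i = k then Qmat n k j else 0) - ((n:ℝ)+1)⁻¹ * Qmat n k j := by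
      intro k
      rw [hP i k]
      split_ifs with h <;> ring
    rw [Finset.sum_congr rfl (fun k _ => hterm k), Finset.sum_sub_distrib,
      Finset.sum_ite_eq, ← Finset.mul_sum]
    simp
  rw [hsum, Qmat_colsum hn j]
  have hvw : vecMulVec (gridVec n - (1/2:ℝ) • onesVec n) (eR n - eL n) i j
      = (gridVec n i - 1/2) * ((if j.1 = n then (1:ℝ) else 0) - (if j.1 = 0 then (1:ℝ) else 0)) := by
    simp [vecMulVec_apply, eR, eL, onesVec]
  rw [hvw]
  by_cases hi : 0 < i.1 ∧ i.1 < n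
  · by_cases hj : 0 < j.1 ∧ j.1 < n
    · have hj0 : ¬ j.1 = 0 := by omega
      have hjn : ¬ j.1 = n := by omega
      rw [if_pos hj]
      simp only [Qmat]
      rw [if_pos hi, if_neg hj0, if_neg hjn]
      ring
    · rw [if_neg hj]
      rcases boundary_cases j hj with rfl | rfl
      · have hij : ¬ i = (⟨0, by omega⟩ : Fin (n+1)) := by
          intro h; rw [h] at hi; exact Nat.lt_irrefl 0 hi.1
        simp only [Qmat]
        rw [if_pos hi, if_neg hij]
        simp only [show ¬((0:ℕ) = n) by omega, if_false, if_neg, ite_true, ite_false,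
          if_pos (show (0:ℕ) = 0 from rfl)]
        field_simp
        ring
      · have hij : ¬ i = (⟨n, by omega⟩ : Fin (n+1)) := by
          intro h; rw [h] at hi; exact Nat.lt_irrefl n hi.2
        simp only [Qmat]
        rw [if_pos hi, if_neg hij]
        simp only [show ¬(n = 0) by omega, if_false, ite_true, ite_false,
          if_pos (show n = n from rfl)]
        field_simp
        ring
  · have hQ0 : Qmat n i j = 0 := by
      simp only [Qmat]; rw [if_neg hi]
    rw [hQ0]
    rcases boundary_cases i hi with rfl | rfl
    · have hg : gridVec n (⟨0, by omega⟩ : Fin (n+1)) = 0 := by simp [gridVec]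
      rw [hg]
      by_cases hj : 0 < j.1 ∧ j.1 < n
      · have hj0 : ¬ j.1 = 0 := by omega
        have hjn : ¬ j.1 = n := by omega
        have hij : ¬ (⟨0, by omega⟩ : Fin (n+1)) = j := by
          intro h
          have hv : (0:ℕ) = j.1 := congrArg Fin.val h
          omega
        rw [if_pos hj, if_neg hj0, if_neg hjn, if_neg hij]
        ring
      · rw [if_neg hj]
        rcases boundary_cases j hj with rfl | rfl
        · rw [if_pos (show ((⟨0, by omega⟩ : Fin (n+1)).1 = 0) from rfl),
            if_neg (show ¬((⟨0, by omega⟩ : Fin (n+1)).1 = n) by show ¬((0:ℕ) = n); omega),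
            if_pos (show (⟨0, by omega⟩ : Fin (n+1)) = ⟨0, by omega⟩ from rfl)]
          field_simp
          ring
        · rw [if_pos (show ((⟨n, by omega⟩ : Fin (n+1)).1 = n) from rfl),
            if_neg (show ¬((⟨n, by omega⟩ : Fin (n+1)).1 = 0) by show ¬(n = 0); omega),
            if_neg (show ¬((⟨0, by omega⟩ : Fin (n+1)) = ⟨n, by omega⟩) by
              intro h; have hv : (0:ℕ) = n := congrArg Fin.val h; omega)]
          field_simp
          ring
    · have hg : gridVec n (⟨n, by omega⟩ : Fin (n+1)) = 1 := by
        simp only [gridVec]; field_simp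
      rw [hg]
      by_cases hj : 0 < j.1 ∧ j.1 < n
      · have hj0 : ¬ j.1 = 0 := by omega
        have hjn : ¬ j.1 = n := by omega
        have hij : ¬ (⟨n, by omega⟩ : Fin (n+1)) = j := by
          intro h
          have hv : n = j.1 := congrArg Fin.val h
          omega
        rw [if_pos hj, if_neg hj0, if_neg hjn, if_neg hij]
        ring
      · rw [if_neg hj]
        rcases boundary_cases j hj with rfl | rfl
        · rw [if_pos (show ((⟨0, by omega⟩ : Fin (n+1)).1 = 0) from rfl),
            if_neg (show ¬((⟨0, by omega⟩ : Fin (n+1)).1 = n) by show ¬((0:ℕ) = n); omega),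
            if_neg (show ¬((⟨n, by omega⟩ : Fin (n+1)) = ⟨0, by omega⟩) by
              intro h; have hv : n = 0 := congrArg Fin.val h; omega)]
          field_simp
          ring
        · rw [if_pos (show ((⟨n, by omega⟩ : Fin (n+1)).1 = n) from rfl),
            if_neg (show ¬((⟨n, by omega⟩ : Fin (n+1)).1 = 0) by show ¬(n = 0); omega),
            if_pos (show (⟨n, by omega⟩ : Fin (n+1)) = ⟨n, by omega⟩ from rfl)]
          field_simp
          ring

theorem Aplus_mul_A_eq_proj
    (n : ℕ) (hn : 2 ≤ n) (A : Matrix (Fin (n+1)) (Fin (n+1)) ℝ)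
    (hsym : A.IsSymm)
    (h1 : A *ᵥ onesVec n = 0)
    (hx : A *ᵥ gridVec n = eR n - eL n)
    (hinv : IsUnit (centralBlock n A).det) :
    Aplus n A * A = 1 - ((n : ℝ) + 1)⁻¹ • vecMulVec (onesVec n) (onesVec n) := by
  have hones : onesVec n ᵥ* A = 0 := by
    rw [← hsym, vecMul_transpose, h1]
  have hPA : (1 - ((n:ℝ)+1)⁻¹ • vecMulVec (onesVec n) (onesVec n)) * A = A := by
    rw [sub_mul, one_mul, Matrix.smul_mul, vecMulVec_mul', hones]
    have hz : vecMulVec (onesVec n) (0 : Fin (n+1) → ℝ) = 0 := by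
      ext a b; simp [vecMulVec_apply]
    rw [hz, smul_zero, sub_zero]
  have hwA : (gridVec n - (1/2:ℝ) • onesVec n) ᵥ* A = eR n - eL n := by
    rw [← hsym, vecMul_transpose, mulVec_sub, mulVec_smul, h1, hx]
    simp
  have hG : G2 n A * A = Qmat n := G2_mul_A A hn h1 hx hinv
  have key : ∀ P Q : Matrix (Fin (n+1)) (Fin (n+1)) ℝ, P * A = A → G2 n A * A = Q →
      (P * G2 n A * P) * A = P * Q := by
    intro P Q hpa hq
    rw [mul_assoc, hpa, mul_assoc, hq]
  unfold Aplus
  rw [add_mul, vecMulVec_mul', hwA, key _ _ hPA hG]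
  exact proj_mul_Q hn
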